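/- arXiv:1807.08256 — 6 statements merged into one kernel-verified Lean document; each statement's English description precedes it below -/
import Mathlib

section
/- Let h, h₁, h₂, τ : ℝ → ℝ, and let m, a, z be real numbers with h₁(m) ≠ 0. Set I = a / h₁(m) − h₂(m). Assume h₁ has derivative h₁'(m) at m, h₂ has derivative h₂'(m) at m, and τ has derivative τ'(I) at I. Then the contaminated-index function ε ↦ τ( ((1−ε)·a + ε·h(z)) / h₁((1−ε)·m + ε·z) − h₂((1−ε)·m + ε·z) ) has derivative at ε = 0 equal to τ'(I) · ( −( h₁'(m)·a / h₁(m)² + h₂'(m) )·(z − m) + (h(z) − a)/h₁(m) ). -/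
theorem influence_function_theil_like
    (h h₁ h₂ τ : ℝ → ℝ) (m a z : ℝ)
    (h₁' h₂' τ' : ℝ)
    (hne : h₁ m ≠ 0)
    (I : ℝ) (hI : I = a / h₁ m - h₂ m)
    (hd1 : HasDerivAt h₁ h₁' m)
    (hd2 : HasDerivAt h₂ h₂' m)
    (hdτ : HasDerivAt τ τ' I) :
    HasDerivAt
      (fun ε : ℝ =>
        τ (((1 - ε) * a + ε * h z) / h₁ ((1 - ε) * m + ε * z)
            - h₂ ((1 - ε) * m + ε * z)))
      (τ' * (-(h₁' * a / (h₁ m) ^ 2 + h₂') * (z - m) + (h z - a) / h₁ m))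
      0 := by
  have hu : HasDerivAt (fun ε : ℝ => (1 - ε) * m + ε * z) (z - m) 0 := by
    have : HasDerivAt (fun ε : ℝ => (1 - ε) * m + ε * z) ((-1) * m + 1 * z) 0 := by
      exact (((hasDerivAt_id 0).const_sub 1).mul_const m).add ((hasDerivAt_id 0).mul_const z)
    simpa [sub_eq_add_neg, add_comm] using this.congr_deriv (by ring)
  have hu0 : (1 - (0:ℝ)) * m + 0 * z = m := by ring
  have hn : HasDerivAt (fun ε : ℝ => (1 - ε) * a + ε * h z) (h z - a) 0 := by
    have : HasDerivAt (fun ε : ℝ => (1 - ε) * a + ε * h z) ((-1) * a + 1 * h z) 0 :=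
      (((hasDerivAt_id 0).const_sub 1).mul_const a).add ((hasDerivAt_id 0).mul_const (h z))
    simpa using this.congr_deriv (by ring)
  have hd1' : HasDerivAt (fun ε : ℝ => h₁ ((1 - ε) * m + ε * z)) (h₁' * (z - m)) 0 := by
    have := (hu0.symm ▸ hd1 : HasDerivAt h₁ h₁' ((1 - (0:ℝ)) * m + 0 * z)).comp 0 hu
    exact this
  have hd2' : HasDerivAt (fun ε : ℝ => h₂ ((1 - ε) * m + ε * z)) (h₂' * (z - m)) 0 := by
    have := (hu0.symm ▸ hd2 : HasDerivAt h₂ h₂' ((1 - (0:ℝ)) * m + 0 * z)).comp 0 hu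
    exact this
  have hne0 : h₁ ((1 - (0:ℝ)) * m + 0 * z) ≠ 0 := by rw [hu0]; exact hne
  have hg : HasDerivAt
      (fun ε : ℝ => ((1 - ε) * a + ε * h z) / h₁ ((1 - ε) * m + ε * z)
          - h₂ ((1 - ε) * m + ε * z))
      (((h z - a) * h₁ ((1 - (0:ℝ)) * m + 0 * z)
        - ((1 - (0:ℝ)) * a + 0 * h z) * (h₁' * (z - m))) / (h₁ ((1 - (0:ℝ)) * m + 0 * z)) ^ 2
        - h₂' * (z - m)) 0 :=
    (hn.div hd1' hne0).sub hd2'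
  have hval : ((1 - (0:ℝ)) * a + 0 * h z) / h₁ ((1 - (0:ℝ)) * m + 0 * z)
      - h₂ ((1 - (0:ℝ)) * m + 0 * z) = I := by rw [hu0, hI]; ring
  have hdτ' := hval ▸ hdτ
  have := hdτ'.comp 0 hg
  convert this using 1
  · rfl
  · rfl
  · rfl
  rw [hu0]
  field_simp
  ring
end

section
/- Let μ > 0, z > 0, and ν be real numbers. Then the function ε ↦ ((1−ε)·ν + ε·z·log z) / ((1−ε)·μ + ε·z) − log((1−ε)·μ + ε·z) has derivative at ε = 0 equal to (1/μ)·(z·log z − ν) − ((ν + μ)/μ²)·(z − μ). -/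
theorem influence_function_Theil (μ z ν : ℝ) (hμ : 0 < μ) (hz : 0 < z) :
    HasDerivAt
      (fun ε : ℝ =>
        ((1 - ε) * ν + ε * (z * Real.log z)) / ((1 - ε) * μ + ε * z)
          - Real.log ((1 - ε) * μ + ε * z))
      ((1 / μ) * (z * Real.log z - ν) - ((ν + μ) / μ ^ 2) * (z - μ))
      0 := by
  have hμ' : μ ≠ 0 := ne_of_gt hμ
  have haff : ∀ c a : ℝ, HasDerivAt (fun ε : ℝ => (1 - ε) * c + ε * a) (a - c) 0 := by
    intro c a
    have h1 : HasDerivAt (fun ε : ℝ => (1 - ε) * c + ε * a)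
        ((0 - 1) * c + 1 * a) 0 :=
      (((hasDerivAt_const (0:ℝ) (1:ℝ)).sub (hasDerivAt_id 0)).mul_const c).add
        ((hasDerivAt_id 0).mul_const a)
    simpa using h1.congr_deriv (by ring)
  have hN : HasDerivAt (fun ε : ℝ => (1 - ε) * ν + ε * (z * Real.log z))
      (z * Real.log z - ν) 0 := haff ν (z * Real.log z)
  have hD : HasDerivAt (fun ε : ℝ => (1 - ε) * μ + ε * z) (z - μ) 0 := haff μ z
  have hD0 : (1 - (0:ℝ)) * μ + 0 * z = μ := by ring
  have hDne : (1 - (0:ℝ)) * μ + 0 * z ≠ 0 := by rw [hD0]; exact hμ'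
  have hdiv := hN.div hD hDne
  have hlog := hD.log hDne
  have h := hdiv.sub hlog
  refine h.congr_deriv ?_
  rw [hD0]
  field_simp
  ring
end

section
/- Let α be a real number with α ≠ 0 and α ≠ 1, and let μ > 0, z > 0, and m_α be real numbers (real powers taken as rpow). Then the function ε ↦ (1/(α(α−1))) · ( ((1−ε)·m_α + ε·z^α) / ((1−ε)·μ + ε·z)^α − 1 ) has derivative at ε = 0 equal to (z^α − m_α)/(α(α−1)μ^α) − (m_α/((α−1)·μ^{α+1}))·(z − μ). -/
theorem influence_function_GE (α μ z mα : ℝ)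
    (hα0 : α ≠ 0) (hα1 : α ≠ 1) (hμ : 0 < μ) (hz : 0 < z) :
    HasDerivAt
      (fun ε : ℝ =>
        (1 / (α * (α - 1))) *
          (((1 - ε) * mα + ε * z ^ α) / ((1 - ε) * μ + ε * z) ^ α - 1))
      ((z ^ α - mα) / (α * (α - 1) * μ ^ α)
        - (mα / ((α - 1) * μ ^ (α + 1))) * (z - μ))
      0 := by
  have hμ0 : μ ≠ 0 := ne_of_gt hμ
  have hμα : (μ : ℝ) ^ α ≠ 0 := (Real.rpow_pos_of_pos hμ α).ne'
  have hN : HasDerivAt (fun ε : ℝ => (1 - ε) * mα + ε * z ^ α) (z ^ α - mα) 0 := by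
    have h := ((((hasDerivAt_id (0:ℝ)).const_sub 1).mul_const mα).add
      ((hasDerivAt_id (0:ℝ)).mul_const (z ^ α)))
    refine h.congr_deriv ?_
    ring
  have hD : HasDerivAt (fun ε : ℝ => (1 - ε) * μ + ε * z) (z - μ) 0 := by
    have h := ((((hasDerivAt_id (0:ℝ)).const_sub 1).mul_const μ).add
      ((hasDerivAt_id (0:ℝ)).mul_const z))
    refine h.congr_deriv ?_
    ring
  have hD0 : (fun ε : ℝ => (1 - ε) * μ + ε * z) 0 = μ := by simp
  have hDα : HasDerivAt (fun ε : ℝ => ((1 - ε) * μ + ε * z) ^ α)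
      ((z - μ) * α * μ ^ (α - 1)) 0 := by
    have h := hD.rpow_const (p := α) (Or.inl (by simpa using hμ0))
    simpa using h
  have hQ : HasDerivAt
      (fun ε : ℝ => ((1 - ε) * mα + ε * z ^ α) / ((1 - ε) * μ + ε * z) ^ α)
      (((z ^ α - mα) * μ ^ α - mα * ((z - μ) * α * μ ^ (α - 1))) / (μ ^ α) ^ 2) 0 := by
    have h := hN.div hDα (by simpa [hD0] using hμα)
    simpa [hD0, Pi.div_def] using h
  have h := hQ.const_mul (1 / (α * (α - 1)))
  have hfun : (fun ε : ℝ => (1 / (α * (α - 1))) *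
        (((1 - ε) * mα + ε * z ^ α) / ((1 - ε) * μ + ε * z) ^ α)) =
      (fun ε : ℝ => (1 / (α * (α - 1))) *
        (((1 - ε) * mα + ε * z ^ α) / ((1 - ε) * μ + ε * z) ^ α - 1)
        + (1 / (α * (α - 1)))) := by
    funext ε; ring
  rw [hfun] at h
  have h2 := h.sub_const (1 / (α * (α - 1)))
  simp only [add_sub_cancel_right] at h2
  refine h2.congr_deriv ?_
  have hα1' : α - 1 ≠ 0 := sub_ne_zero.mpr hα1
  have e1 : μ ^ (α + 1) = μ ^ α * μ := by
    rw [Real.rpow_add hμ, Real.rpow_one]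
  have e2 : μ ^ (α - 1) = μ ^ α / μ := by
    rw [Real.rpow_sub hμ, Real.rpow_one]
  rw [e1, e2]
  field_simp
end

section
/- Let β be a real number with 0 < β < 1, and let μ > 0, z > 0, and m_β > 0 be real numbers (real powers taken as rpow). Then the function ε ↦ 1 − ( ((1−ε)·m_β + ε·z^β) / ((1−ε)·μ + ε·z)^β )^{1/β} has derivative at ε = 0 equal to (m_β^{1/β}/μ) · ( (z − μ)/μ − (z^β − m_β)/(β·m_β) ). -/
theorem influence_function_Atkinson (β μ z mβ : ℝ)
    (hβ0 : 0 < β) (hβ1 : β < 1) (hμ : 0 < μ) (hz : 0 < z) (hm : 0 < mβ) :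
    HasDerivAt
      (fun ε : ℝ =>
        1 - (((1 - ε) * mβ + ε * z ^ β) / ((1 - ε) * μ + ε * z) ^ β) ^ (1 / β))
      ((mβ ^ (1 / β) / μ) * ((z - μ) / μ - (z ^ β - mβ) / (β * mβ)))
      0 := by
  have hA : HasDerivAt (fun ε : ℝ => (1 - ε) * mβ + ε * z ^ β) (z ^ β - mβ) 0 := by
    have := (((hasDerivAt_id (0:ℝ)).const_sub 1).mul_const mβ).add
      ((hasDerivAt_id (0:ℝ)).mul_const (z ^ β))
    exact this.congr_deriv (by ring)
  have hB : HasDerivAt (fun ε : ℝ => (1 - ε) * μ + ε * z) (z - μ) 0 := by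
    have := (((hasDerivAt_id (0:ℝ)).const_sub 1).mul_const μ).add
      ((hasDerivAt_id (0:ℝ)).mul_const z)
    exact this.congr_deriv (by ring)
  have hB0 : ((1 - (0:ℝ)) * μ + 0 * z) = μ := by ring
  have hBp : HasDerivAt (fun ε : ℝ => ((1 - ε) * μ + ε * z) ^ β)
      ((z - μ) * β * μ ^ (β - 1)) 0 := by
    have := hB.rpow_const (p := β) (by rw [hB0]; exact Or.inl hμ.ne')
    rwa [hB0] at this
  have hμβ : (0:ℝ) < μ ^ β := Real.rpow_pos_of_pos hμ β
  have hf : HasDerivAt (fun ε : ℝ => ((1 - ε) * mβ + ε * z ^ β) / ((1 - ε) * μ + ε * z) ^ β)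
      (((z ^ β - mβ) * μ ^ β - mβ * ((z - μ) * β * μ ^ (β - 1))) / (μ ^ β) ^ 2) 0 := by
    have := hA.div hBp (by rw [hB0]; exact hμβ.ne')
    exact this.congr_deriv (by simp)
  have hf0 : ((1 - (0:ℝ)) * mβ + 0 * z ^ β) / ((1 - (0:ℝ)) * μ + 0 * z) ^ β = mβ / μ ^ β := by
    rw [hB0]; ring
  have hg := hf.rpow_const (p := 1 / β)
      (by rw [hf0]; exact Or.inl (div_pos hm hμβ).ne')
  rw [hf0] at hg
  have := hg.const_sub 1
  refine this.congr_deriv ?_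
  have hβ : β ≠ 0 := hβ0.ne'
  rw [Real.div_rpow hm.le hμβ.le, ← Real.rpow_natCast (μ ^ β) 2,
      ← Real.rpow_mul hμ.le, ← Real.rpow_mul hμ.le,
      Real.rpow_sub hμ, Real.rpow_sub hm, Real.rpow_one, Real.rpow_one]
  have hmb : (0:ℝ) < mβ ^ (1/β) := Real.rpow_pos_of_pos hm _
  have e1 : μ ^ (β * ((2:ℕ):ℝ)) = μ ^ β * μ ^ β := by
    push_cast
    rw [show β * (2:ℝ) = β + β by ring, Real.rpow_add hμ]
  have e2 : μ ^ (β * (1/β - 1)) = μ / μ ^ β := by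
    rw [mul_sub, mul_one_div, div_self hβ, mul_one, Real.rpow_sub hμ, Real.rpow_one]
  rw [e1, e2]
  field_simp
  ring
end

section
/- Let μ > 0, z > 0, and ν be real numbers. Then the function ε ↦ 1 − exp( ((1−ε)·ν + ε·log z) − log((1−ε)·μ + ε·z) ) has derivative at ε = 0 equal to (exp(ν)/μ) · ( (z − μ)/μ − (log z − ν) ). -/
theorem influence_function_Champernowne (μ z ν : ℝ) (hμ : 0 < μ) (hz : 0 < z) :
    HasDerivAt
      (fun ε : ℝ =>
        1 - Real.exp (((1 - ε) * ν + ε * Real.log z)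
              - Real.log ((1 - ε) * μ + ε * z)))
      ((Real.exp ν / μ) * ((z - μ) / μ - (Real.log z - ν)))
      0 := by
  have hh : HasDerivAt (fun ε : ℝ => (1 - ε) * μ + ε * z) (z - μ) 0 := by
    have : HasDerivAt (fun ε : ℝ => (1 - ε) * μ + ε * z) ((-1) * μ + z) 0 := by
      exact ((((hasDerivAt_id 0).const_sub 1).mul_const μ).add ((hasDerivAt_id 0).mul_const z)).congr_deriv (by ring)
    simpa [neg_mul, sub_eq_add_neg, add_comm] using this
  have hg : HasDerivAt (fun ε : ℝ => (1 - ε) * ν + ε * Real.log z) (Real.log z - ν) 0 := by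
    have : HasDerivAt (fun ε : ℝ => (1 - ε) * ν + ε * Real.log z) ((-1) * ν + Real.log z) 0 := by
      exact ((((hasDerivAt_id 0).const_sub 1).mul_const ν).add ((hasDerivAt_id 0).mul_const (Real.log z))).congr_deriv (by ring)
    simpa [neg_mul, sub_eq_add_neg, add_comm] using this
  have hne : (1 - (0:ℝ)) * μ + 0 * z ≠ 0 := by simp [hμ.ne']
  have hlog : HasDerivAt (fun ε : ℝ => Real.log ((1 - ε) * μ + ε * z)) ((z - μ) / μ) 0 := by
    have := hh.log hne
    simpa using this
  have hinner : HasDerivAt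
      (fun ε : ℝ => ((1 - ε) * ν + ε * Real.log z) - Real.log ((1 - ε) * μ + ε * z))
      ((Real.log z - ν) - (z - μ) / μ) 0 := hg.sub hlog
  have hexp := hinner.exp
  have hfinal := (hasDerivAt_const (0:ℝ) (1:ℝ)).sub hexp
  have heq : -(Real.exp (ν - Real.log μ) * (Real.log z - ν - (z - μ) / μ))
      = (Real.exp ν / μ) * ((z - μ) / μ - (Real.log z - ν)) := by
    rw [Real.exp_sub, Real.exp_log hμ]; ring
  have := hfinal
  simp only [sub_zero] at this
  rw [← heq]
  exact this.congr_deriv (by simp)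
end

section
/- Let α > 0, let μ and z be real numbers, and let K > 0 be a real number. Then the function ε ↦ (1/α) · log( ((1−ε)·K + ε·exp(−α z)) / exp(−α·((1−ε)·μ + ε·z)) ) has derivative at ε = 0 equal to (z − μ) + (exp(−α z) − K)/(α·K). -/
theorem influence_function_Kolm (α μ z K : ℝ) (hα : 0 < α) (hK : 0 < K) :
    HasDerivAt
      (fun ε : ℝ =>
        (1 / α) * Real.log
          (((1 - ε) * K + ε * Real.exp (-α * z))
            / Real.exp (-α * ((1 - ε) * μ + ε * z))))
      ((z - μ) + (Real.exp (-α * z) - K) / (α * K))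
      0 := by
  set E := Real.exp (-α * z) with hE
  have hEpos : 0 < E := Real.exp_pos _
  -- derivative of numerator
  have hN : HasDerivAt (fun ε : ℝ => (1 - ε) * K + ε * E) (E - K) 0 := by
    have h1 := (((hasDerivAt_id (0:ℝ)).const_sub 1).mul_const K).add
      ((hasDerivAt_id (0:ℝ)).mul_const E)
    exact h1.congr_deriv (by ring)
  -- numerator positive near 0
  have hcont : ContinuousAt (fun ε : ℝ => (1 - ε) * K + ε * E) 0 := by fun_prop
  have hNpos : ∀ᶠ ε in nhds (0:ℝ), 0 < (1 - ε) * K + ε * E := by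
    have h0 : (0:ℝ) < (1 - 0) * K + 0 * E := by simpa using hK
    exact hcont.eventually (by have h := (isOpen_lt continuous_const continuous_id).mem_nhds (show (1 - 0) * K + 0 * E ∈ {b : ℝ | (0:ℝ) < id b} from h0); exact h)
  -- alternative function without division
  have hg : HasDerivAt
      (fun ε : ℝ => (1 / α) * Real.log ((1 - ε) * K + ε * E) + α * ((1 - ε) * μ + ε * z) / α)
      ((z - μ) + (E - K) / (α * K)) 0 := by
    have hlog : HasDerivAt (fun ε : ℝ => Real.log ((1 - ε) * K + ε * E)) ((E - K) / K) 0 := by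
      have := hN.log (by positivity)
      simpa using this
    have hlin : HasDerivAt (fun ε : ℝ => α * ((1 - ε) * μ + ε * z) / α) (z - μ) 0 := by
      have h2 : HasDerivAt (fun ε : ℝ => (1 - ε) * μ + ε * z) (z - μ) 0 := by
        have h1 := (((hasDerivAt_id (0:ℝ)).const_sub 1).mul_const μ).add
          ((hasDerivAt_id (0:ℝ)).mul_const z)
        exact h1.congr_deriv (by ring)
      have := (h2.const_mul α).div_const α
      refine this.congr_deriv ?_
      field_simp
    have := (hlog.const_mul (1 / α)).add hlin
    refine this.congr_deriv ?_
    field_simp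
    ring
  refine hg.congr_of_eventuallyEq ?_
  filter_upwards [hNpos] with ε hε
  rw [Real.log_div (ne_of_gt hε) (Real.exp_ne_zero _), Real.log_exp]
  field_simp
  ring
end
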